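/- Let $\Theta_1,\Theta_2,\ldots$ be IID real random variables with mean $\mu \le 0$ and variance $\sigma^2$, and define $S_1 \ge 0$, $S_{i+1} = \max\{S_i + \Theta_i, 0\}$. Then for every $k \ge 1$, $\mathbb{E}[S_{k+1}] \le \sqrt{k(\mu^2 + \sigma^2) + S_1^2}$. -/

import Mathlib

open MeasureTheory ProbabilityTheory Filter

/-- Auxiliary recursion computing the reflected random walk from the increments. -/
noncomputable def rwG (s₁ : ℝ) : ℕ → (ℕ → ℝ) → ℝ
  | 0 => fun _ => s₁
  | n + 1 => fun x => max (rwG s₁ n x + x (n + 1)) 0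

lemma rwG_measurable (s₁ : ℝ) : ∀ n, Measurable (rwG s₁ n)
  | 0 => measurable_const
  | n + 1 => ((rwG_measurable s₁ n).add (measurable_pi_apply _)).max measurable_const

lemma rwG_local (s₁ : ℝ) :
    ∀ n (x y : ℕ → ℝ), (∀ i ≤ n, x i = y i) → rwG s₁ n x = rwG s₁ n y
  | 0, _, _, _ => rfl
  | n + 1, x, y, h => by
      simp only [rwG]
      rw [rwG_local s₁ n x y (fun i hi => h i (hi.trans (Nat.le_succ n))), h (n + 1) le_rfl]

/-- Reflected random walk with IID nonpositive-mean increments: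
`E[S (k+1)] ≤ sqrt (k (μ² + σ²) + S₁²)`. -/
theorem stmt0 {Ω : Type*} [MeasureSpace Ω] [IsProbabilityMeasure (ℙ : Measure Ω)]
    (Θ : ℕ → Ω → ℝ) (S : ℕ → Ω → ℝ) (μ σ s₁ : ℝ)
    (hmeas : ∀ i, Measurable (Θ i))
    (hindep : iIndepFun Θ ℙ)
    (hident : ∀ i j, IdentDistrib (Θ i) (Θ j) ℙ ℙ)
    (hL2 : ∀ i, MemLp (Θ i) 2 ℙ)
    (hmean : ∀ i, ∫ ω, Θ i ω ∂ℙ = μ) (hμ : μ ≤ 0)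
    (hvar : ∀ i, variance (Θ i) ℙ = σ ^ 2)
    (hS1 : ∀ ω, S 1 ω = s₁) (hs₁ : 0 ≤ s₁)
    (hSdyn : ∀ i ≥ 1, ∀ ω, S (i + 1) ω = max (S i ω + Θ i ω) 0) :
    ∀ k ≥ 1, ∫ ω, S (k + 1) ω ∂ℙ ≤ Real.sqrt (k * (μ ^ 2 + σ ^ 2) + s₁ ^ 2) := by
  -- pointwise nonnegativity
  have hpos : ∀ k, 1 ≤ k → ∀ ω, 0 ≤ S k ω := by
    intro k hk
    match k, hk with
    | 1, _ => intro ω; rw [hS1 ω]; exact hs₁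
    | (n + 2), _ => intro ω; rw [hSdyn (n + 1) (by omega) ω]; exact le_max_right _ _
  -- measurability
  have hSm : ∀ k, 1 ≤ k → Measurable (S k) := by
    intro k hk
    induction k with
    | zero => omega
    | succ n ih =>
      rcases Nat.eq_or_lt_of_le hk with h | h
      · have : S 1 = fun _ => s₁ := funext hS1
        rw [← h, this]; exact measurable_const
      · have hn : 1 ≤ n := by omega
        have : S (n + 1) = fun ω => max (S n ω + Θ n ω) 0 := funext (hSdyn n hn)
        rw [this]; exact ((ih hn).add (hmeas n)).max measurable_const
  -- L² membership
  have hSL2 : ∀ k, 1 ≤ k → MemLp (S k) 2 ℙ := by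
    intro k hk
    induction k with
    | zero => omega
    | succ n ih =>
      rcases Nat.eq_or_lt_of_le hk with h | h
      · have : S 1 = fun _ => s₁ := funext hS1
        rw [← h, this]; exact memLp_const s₁
      · have hn : 1 ≤ n := by omega
        refine MemLp.of_le ((ih hn).add (hL2 n)) ((hSm _ hk).aestronglyMeasurable) ?_
        filter_upwards with ω
        have e : S (n + 1) ω = max ((S n + Θ n) ω) 0 := hSdyn n hn ω
        rw [e, Real.norm_eq_abs, Real.norm_eq_abs, abs_of_nonneg (le_max_right _ _)]
        exact max_le (le_abs_self _) (abs_nonneg _)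
  -- representation of S (k+1) as a function of Θ 0, ..., Θ (k)
  have hrep : ∀ k, ∀ ω, S (k + 1) ω = rwG s₁ k (fun i => Θ i ω) := by
    intro k
    induction k with
    | zero => intro ω; exact hS1 ω
    | succ n ih =>
      intro ω
      rw [hSdyn (n + 1) (by omega) ω, ih ω]
      rfl
  -- independence of S (k+1) and Θ (k+1)
  have hInd : ∀ k : ℕ, IndepFun (S (k + 1)) (Θ (k + 1)) ℙ := by
    intro k
    have hdisj : Disjoint (Finset.range (k + 1)) ({k + 1} : Finset ℕ) := by
      simp [Finset.disjoint_singleton_right]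
    have h := hindep.indepFun_finset (Finset.range (k + 1)) {k + 1} hdisj hmeas
    set g : ((Finset.range (k + 1) : Finset ℕ) → ℝ) → ℝ := fun x =>
      rwG s₁ k (fun i => if h : i ∈ Finset.range (k + 1) then x ⟨i, h⟩ else 0) with hgdef
    have hgm : Measurable g := by
      apply (rwG_measurable s₁ k).comp
      apply measurable_pi_lambda
      intro i
      by_cases hi : i ∈ Finset.range (k + 1)
      · simpa [hi] using measurable_pi_apply (⟨i, hi⟩ : (Finset.range (k + 1) : Finset ℕ))
      · simpa [hi] using measurable_const
    have hg2 : Measurable (fun y : (({k + 1} : Finset ℕ) : Finset ℕ) → ℝ =>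
        y ⟨k + 1, Finset.mem_singleton_self _⟩) := measurable_pi_apply _
    have hcomp := h.comp hgm hg2
    have e1 : (fun ω => g (fun i : (Finset.range (k + 1) : Finset ℕ) => Θ i ω)) = S (k + 1) := by
      funext ω
      rw [hrep k ω, hgdef]
      apply rwG_local
      intro i hi
      simp [Finset.mem_range.mpr (Nat.lt_succ_of_le hi)]
    have e2 : (fun ω => (fun y : (({k + 1} : Finset ℕ) : Finset ℕ) → ℝ =>
        y ⟨k + 1, Finset.mem_singleton_self _⟩) (fun i : (({k + 1} : Finset ℕ) : Finset ℕ) => Θ i ω))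
        = Θ (k + 1) := rfl
    rw [← e1, ← e2]
    exact hcomp
  -- key induction: second moment bound
  have key : ∀ k : ℕ, ∫ ω, S (k + 1) ω ^ 2 ≤ k * (μ ^ 2 + σ ^ 2) + s₁ ^ 2 := by
    intro k
    induction k with
    | zero =>
      have : (fun ω => S 1 ω ^ 2) = fun _ : Ω => s₁ ^ 2 := by
        funext ω; rw [hS1 ω]
      rw [this]; simp
    | succ n ih =>
      have hS1n : MemLp (S (n + 1)) 2 ℙ := hSL2 (n + 1) (by omega)
      have hSk2 : Integrable (fun ω => S (n + 1) ω ^ 2) ℙ := hS1n.integrable_sq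
      have hTk2 : Integrable (fun ω => Θ (n + 1) ω ^ 2) ℙ := (hL2 (n + 1)).integrable_sq
      have hmul : Integrable (fun ω => S (n + 1) ω * Θ (n + 1) ω) ℙ := by
        refine Integrable.mono' (hSk2.add hTk2)
          (((hSm (n + 1) (by omega)).mul (hmeas (n + 1))).aestronglyMeasurable) ?_
        filter_upwards with ω
        simp only [Real.norm_eq_abs, Pi.add_apply]
        rcases abs_cases (S (n + 1) ω * Θ (n + 1) ω) with ⟨h1, _⟩ | ⟨h1, _⟩ <;> rw [h1] <;> nlinarith [sq_nonneg (S (n + 1) ω - Θ (n + 1) ω), sq_nonneg (S (n + 1) ω + Θ (n + 1) ω)]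
      have h1 : ∫ ω, S (n + 2) ω ^ 2 ≤ ∫ ω, (S (n + 1) ω + Θ (n + 1) ω) ^ 2 := by
        refine integral_mono (hSL2 (n + 2) (by omega)).integrable_sq
          (hS1n.add (hL2 (n + 1))).integrable_sq ?_
        intro ω
        show S (n + 2) ω ^ 2 ≤ (S (n + 1) ω + Θ (n + 1) ω) ^ 2
        rw [hSdyn (n + 1) (by omega) ω]
        rcases le_or_gt (S (n + 1) ω + Θ (n + 1) ω) 0 with h' | h'
        · rw [max_eq_right h']; simpa using sq_nonneg (S (n + 1) ω + Θ (n + 1) ω)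
        · rw [max_eq_left h'.le]
      have hvar2 : ∫ ω, Θ (n + 1) ω ^ 2 = σ ^ 2 + μ ^ 2 := by
        have hv := variance_eq_sub (hL2 (n + 1))
        rw [hvar (n + 1), hmean (n + 1)] at hv
        simp only [Pi.pow_apply] at hv
        linarith
      have hcross : ∫ ω, S (n + 1) ω * Θ (n + 1) ω = (∫ ω, S (n + 1) ω) * μ := by
        have h := (hInd n).integral_mul_eq_mul_integral ((hSm (n + 1) (by omega)).aestronglyMeasurable)
          ((hmeas (n + 1)).aestronglyMeasurable)
        simpa [Pi.mul_apply, hmean (n + 1)] using h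
      have hexp : ∫ ω, (S (n + 1) ω + Θ (n + 1) ω) ^ 2
          = (∫ ω, S (n + 1) ω ^ 2) + 2 * ((∫ ω, S (n + 1) ω) * μ) + (σ ^ 2 + μ ^ 2) := by
        have e : (fun ω => (S (n + 1) ω + Θ (n + 1) ω) ^ 2)
            = fun ω => (S (n + 1) ω ^ 2 + 2 * (S (n + 1) ω * Θ (n + 1) ω)) + Θ (n + 1) ω ^ 2 := by
          funext ω; ring
        have hI2 : Integrable (fun ω => 2 * (S (n + 1) ω * Θ (n + 1) ω)) ℙ := hmul.const_mul 2
        have hI1 : Integrable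
            (fun ω => S (n + 1) ω ^ 2 + 2 * (S (n + 1) ω * Θ (n + 1) ω)) ℙ := hSk2.add hI2
        rw [e, integral_add hI1 hTk2, integral_add hSk2 hI2, integral_const_mul, hcross, hvar2]
      have hEnonneg : 0 ≤ ∫ ω, S (n + 1) ω := integral_nonneg (hpos (n + 1) (by omega))
      have hcrossneg : (∫ ω, S (n + 1) ω) * μ ≤ 0 := mul_nonpos_of_nonneg_of_nonpos hEnonneg hμ
      have : ∫ ω, S (n + 2) ω ^ 2 ≤ (∫ ω, S (n + 1) ω ^ 2) + (μ ^ 2 + σ ^ 2) := by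
        rw [hexp] at h1; linarith
      calc ∫ ω, S (n + 1 + 1) ω ^ 2 ≤ (∫ ω, S (n + 1) ω ^ 2) + (μ ^ 2 + σ ^ 2) := this
        _ ≤ (n * (μ ^ 2 + σ ^ 2) + s₁ ^ 2) + (μ ^ 2 + σ ^ 2) := by linarith
        _ = (n + 1 : ℕ) * (μ ^ 2 + σ ^ 2) + s₁ ^ 2 := by push_cast; ring
  -- finish
  intro k hk
  have hE : 0 ≤ ∫ ω, S (k + 1) ω := integral_nonneg (hpos (k + 1) (by omega))
  have hb : (0 : ℝ) ≤ k * (μ ^ 2 + σ ^ 2) + s₁ ^ 2 := by positivity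
  rw [Real.le_sqrt hE hb]
  have hv := variance_nonneg (S (k + 1)) ℙ
  rw [variance_eq_sub (hSL2 (k + 1) (by omega))] at hv
  simp only [Pi.pow_apply] at hv
  have := key k
  linarith
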